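/- arXiv:math/0105065 — 2 statements merged into one kernel-verified Lean document; each statement's English description precedes it below -/
import Mathlib

section
/- Let P and Q be packed matrices and N ≥ 1. Then in ℚ[x₁,…,x_N]: Σ_{R ∈ ⧢(P,Q)} M_{Row(R)}(x₁,…,x_N) = M_{Row(P)}(x₁,…,x_N) · M_{Row(Q)}(x₁,…,x_N). (This says that the evaluation map Ev : MS_P ↦ M_{Row(P)} is an algebra homomorphism from MQSym onto the quasi-symmetric functions.) -/
open scoped Classical

noncomputable section

/-- A packed matrix: a matrix of nonnegative integers with no zero row and no zero column. -/
structure PackedMatrix where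
  p : ℕ
  q : ℕ
  entry : Fin p → Fin q → ℕ
  rows_nonzero : ∀ i, ∃ j, entry i j ≠ 0
  cols_nonzero : ∀ j, ∃ i, entry i j ≠ 0

/-- The ideal `ℚ[X]⁺` of polynomials with zero constant term, as a `ℚ`-submodule of
`ℚ[x₁,…,x_N]`. -/
def PolyPlus (N : ℕ) : Submodule ℚ (MvPolynomial (Fin N) ℚ) :=
  (RingHom.ker (MvPolynomial.constantCoeff (R := ℚ) (σ := Fin N))).restrictScalars ℚ

/-- The tensor algebra `ℚ{X} = T(ℚ[X]⁺)`. -/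
abbrev QX (N : ℕ) := TensorAlgebra ℚ (PolyPlus N)

/-- The `j`-th column monomial `m_j = Π_i a_i^{M_{ij}}` of a packed matrix, for a choice
`a : Fin p → Fin N` of `p` variables; it lies in `ℚ[X]⁺` since column `j` is nonzero. -/
def colMonomial (N : ℕ) (P : PackedMatrix) (a : Fin P.p → Fin N) (j : Fin P.q) :
    PolyPlus N :=
  ⟨∏ i, MvPolynomial.X (a i) ^ P.entry i j, by
    obtain ⟨i, hi⟩ := P.cols_nonzero j
    simp only [PolyPlus, Submodule.restrictScalars_mem, RingHom.mem_ker, map_prod, map_pow,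
      MvPolynomial.constantCoeff_X]
    exact Finset.prod_eq_zero (Finset.mem_univ i) (zero_pow hi)⟩

/-- `A^M ∈ ℚ{X}` : the dot product `m₁ · m₂ ⋯ m_q` of the column monomials of `M` on the
variable set `A` (given by a strictly increasing `a : Fin p → Fin N`). -/
def dotMonomial (N : ℕ) (P : PackedMatrix) (a : Fin P.p → Fin N) : QX N :=
  (List.ofFn fun j : Fin P.q => TensorAlgebra.ι ℚ (colMonomial N P a j)).prod

/-- `MS_M = Σ_{A ⊆ X, |A| = p} A^M ∈ ℚ{X}`. -/
def MS (N : ℕ) (P : PackedMatrix) : QX N :=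
  ∑ a ∈ Finset.univ.filter (fun a : Fin P.p → Fin N => StrictMono a),
    dotMonomial N P a

/-- The augmented shuffle `⧢(P,Q)` of two packed matrices: all packed matrices obtained by
inserting zero rows into `P` and `Q` so as to reach a common height and concatenating the
resulting matrices horizontally, keeping only the results with no zero row. Here `f` (resp.
`g`) records the positions of the rows of `P` (resp. `Q`) in the result. -/
def AugShuffle (P Q : PackedMatrix) : Set PackedMatrix :=
  {R | ∃ h : R.q = P.q + Q.q, ∃ (f : Fin P.p → Fin R.p) (g : Fin Q.p → Fin R.p),
    StrictMono f ∧ StrictMono g ∧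
    (∀ i : Fin R.p, i ∈ Set.range f ∨ i ∈ Set.range g) ∧
    (∀ (i : Fin P.p) (j : Fin P.q),
      R.entry (f i) (Fin.cast h.symm (Fin.castAdd Q.q j)) = P.entry i j) ∧
    (∀ i : Fin R.p, i ∉ Set.range f → ∀ j : Fin P.q,
      R.entry i (Fin.cast h.symm (Fin.castAdd Q.q j)) = 0) ∧
    (∀ (i : Fin Q.p) (j : Fin Q.q),
      R.entry (g i) (Fin.cast h.symm (Fin.natAdd P.q j)) = Q.entry i j) ∧
    (∀ i : Fin R.p, i ∉ Set.range g → ∀ j : Fin Q.q,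
      R.entry i (Fin.cast h.symm (Fin.natAdd P.q j)) = 0)}

end

noncomputable section

/-- The row sums of a packed matrix (the composition `Row(P)`, as a function). -/
def rowSums (P : PackedMatrix) (i : Fin P.p) : ℕ :=
  ∑ j, P.entry i j

/-- The monomial quasi-symmetric polynomial
`M_c(x₁,…,x_N) = Σ_{j₁<⋯<j_r} x_{j₁}^{c₁}⋯x_{j_r}^{c_r}`. -/
def MQS (N : ℕ) {r : ℕ} (c : Fin r → ℕ) : MvPolynomial (Fin N) ℚ :=
  ∑ j ∈ Finset.univ.filter (fun j : Fin r → Fin N => StrictMono j),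
    ∏ t, MvPolynomial.X (j t) ^ c t

/-! ### Auxiliary material -/

lemma PackedMatrix.ext' {R S : PackedMatrix} (hp : R.p = S.p) (hq : R.q = S.q)
    (he : ∀ i j, R.entry i j = S.entry (Fin.cast hp i) (Fin.cast hq j)) : R = S := by
  cases R with
  | mk p q e hr hc =>
    cases S with
    | mk p' q' e' hr' hc' =>
      dsimp at hp hq he
      subst hp; subst hq
      have : e = e' := by
        funext i j
        simpa using he i j
      subst this
      rfl

lemma PackedMatrix.entry_congr {R S : PackedMatrix} (h : R = S) (hp : R.p = S.p)
    (hq : R.q = S.q) (i : Fin R.p) (j : Fin R.q) :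
    R.entry i j = S.entry (Fin.cast hp i) (Fin.cast hq j) := by
  subst h; rfl

/-- Two strictly monotone maps `Fin m → Fin r` with the same range are equal. -/
lemma strictMono_eq_of_range_eq {m r : ℕ} {f f' : Fin m → Fin r}
    (hf : StrictMono f) (hf' : StrictMono f')
    (h : ∀ t, (∃ i, f i = t) ↔ (∃ i, f' i = t)) : f = f' := by
  set s : Finset (Fin r) := Finset.image f Finset.univ with hs
  have hcard : s.card = m := by
    rw [hs, Finset.card_image_of_injective _ hf.injective, Finset.card_univ, Fintype.card_fin]
  have h1 : f = s.orderEmbOfFin hcard :=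
    Finset.orderEmbOfFin_unique hcard
      (fun x => Finset.mem_image.2 ⟨x, Finset.mem_univ _, rfl⟩) hf
  have h2 : f' = s.orderEmbOfFin hcard :=
    Finset.orderEmbOfFin_unique hcard
      (fun x => Finset.mem_image.2 ⟨(h (f' x)).2 ⟨x, rfl⟩ |>.choose, Finset.mem_univ _,
        ((h (f' x)).2 ⟨x, rfl⟩).choose_spec⟩) hf'
  rw [h1, h2]

/-- Shuffle data: a common height `r` together with strictly monotone, jointly
surjective placements of the rows of `P` and `Q`. -/
structure SD (P Q : PackedMatrix) where
  r : ℕ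
  f : Fin P.p → Fin r
  g : Fin Q.p → Fin r
  hf : StrictMono f
  hg : StrictMono g
  cover : ∀ t, (∃ i, f i = t) ∨ (∃ i, g i = t)

namespace SD

variable {P Q : PackedMatrix}

lemma r_le (D : SD P Q) : D.r ≤ P.p + Q.p := by
  have hsub : (Finset.univ : Finset (Fin D.r)) ⊆
      Finset.image D.f Finset.univ ∪ Finset.image D.g Finset.univ := by
    intro t _
    rcases D.cover t with ⟨i, hi⟩ | ⟨i, hi⟩
    · exact Finset.mem_union_left _ (Finset.mem_image.2 ⟨i, Finset.mem_univ _, hi⟩)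
    · exact Finset.mem_union_right _ (Finset.mem_image.2 ⟨i, Finset.mem_univ _, hi⟩)
  calc D.r = (Finset.univ : Finset (Fin D.r)).card := by simp
    _ ≤ (Finset.image D.f Finset.univ ∪ Finset.image D.g Finset.univ).card :=
        Finset.card_le_card hsub
    _ ≤ (Finset.image D.f Finset.univ).card + (Finset.image D.g Finset.univ).card :=
        Finset.card_union_le _ _
    _ ≤ P.p + Q.p := add_le_add (le_trans (Finset.card_image_le) (by simp))
        (le_trans (Finset.card_image_le) (by simp))

private def emb (D : SD P Q) :
    Σ r : Fin (P.p + Q.p + 1), (Fin P.p → Fin r) × (Fin Q.p → Fin r) :=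
  ⟨⟨D.r, Nat.lt_succ_of_le D.r_le⟩, D.f, D.g⟩

private lemma emb_injective : Function.Injective (emb (P := P) (Q := Q)) := by
  rintro ⟨r, f, g, hf, hg, cov⟩ ⟨r', f', g', hf', hg', cov'⟩ h
  have hr : r = r' := congrArg (fun x => (x.1 : ℕ)) h
  subst hr
  simp only [emb, Sigma.mk.inj_iff, heq_eq_eq, Prod.mk.injEq, true_and] at h
  obtain ⟨h1, h2⟩ := h
  subst h1; subst h2
  rfl

instance : Fintype (SD P Q) := Fintype.ofInjective emb emb_injective

/-- The matrix associated to shuffle data. -/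
def toMatrix (D : SD P Q) : PackedMatrix where
  p := D.r
  q := P.q + Q.q
  entry i := Fin.addCases
    (fun j => if h : ∃ i', D.f i' = i then P.entry h.choose j else 0)
    (fun j => if h : ∃ i', D.g i' = i then Q.entry h.choose j else 0)
  rows_nonzero := by
    intro i
    rcases D.cover i with ⟨i', hi'⟩ | ⟨i', hi'⟩
    · obtain ⟨j, hj⟩ := P.rows_nonzero i'
      refine ⟨Fin.castAdd Q.q j, ?_⟩
      have h : ∃ i₀, D.f i₀ = i := ⟨i', hi'⟩
      have hc : h.choose = i' := D.hf.injective (h.choose_spec.trans hi'.symm)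
      simpa [Fin.addCases_left, dif_pos h, hc] using hj
    · obtain ⟨j, hj⟩ := Q.rows_nonzero i'
      refine ⟨Fin.natAdd P.q j, ?_⟩
      have h : ∃ i₀, D.g i₀ = i := ⟨i', hi'⟩
      have hc : h.choose = i' := D.hg.injective (h.choose_spec.trans hi'.symm)
      simpa [Fin.addCases_right, dif_pos h, hc] using hj
  cols_nonzero := by
    intro j
    induction j using Fin.addCases with
    | left j₁ =>
      obtain ⟨i, hi⟩ := P.cols_nonzero j₁
      refine ⟨D.f i, ?_⟩
      have h : ∃ i₀, D.f i₀ = D.f i := ⟨i, rfl⟩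
      have hc : h.choose = i := D.hf.injective h.choose_spec
      simpa [Fin.addCases_left, dif_pos h, hc] using hi
    | right j₂ =>
      obtain ⟨i, hi⟩ := Q.cols_nonzero j₂
      refine ⟨D.g i, ?_⟩
      have h : ∃ i₀, D.g i₀ = D.g i := ⟨i, rfl⟩
      have hc : h.choose = i := D.hg.injective h.choose_spec
      simpa [Fin.addCases_right, dif_pos h, hc] using hi

lemma entry_left (D : SD P Q) (i₀ : Fin P.p) (j : Fin P.q) :
    D.toMatrix.entry (D.f i₀) (Fin.castAdd Q.q j) = P.entry i₀ j := by
  have h : ∃ i', D.f i' = D.f i₀ := ⟨i₀, rfl⟩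
  have hc : h.choose = i₀ := D.hf.injective h.choose_spec
  simp [toMatrix, Fin.addCases_left, dif_pos h, hc]

lemma entry_left_zero (D : SD P Q) (i : Fin D.r) (hi : ¬ ∃ i', D.f i' = i) (j : Fin P.q) :
    D.toMatrix.entry i (Fin.castAdd Q.q j) = 0 := by
  simp [toMatrix, Fin.addCases_left, dif_neg hi]

lemma entry_right (D : SD P Q) (i₀ : Fin Q.p) (j : Fin Q.q) :
    D.toMatrix.entry (D.g i₀) (Fin.natAdd P.q j) = Q.entry i₀ j := by
  have h : ∃ i', D.g i' = D.g i₀ := ⟨i₀, rfl⟩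
  have hc : h.choose = i₀ := D.hg.injective h.choose_spec
  simp [toMatrix, Fin.addCases_right, dif_pos h, hc]

lemma entry_right_zero (D : SD P Q) (i : Fin D.r) (hi : ¬ ∃ i', D.g i' = i) (j : Fin Q.q) :
    D.toMatrix.entry i (Fin.natAdd P.q j) = 0 := by
  simp [toMatrix, Fin.addCases_right, dif_neg hi]

lemma toMatrix_injective : Function.Injective (toMatrix (P := P) (Q := Q)) := by
  intro D E h
  obtain ⟨r, f, g, hf, hg, cov⟩ := D
  obtain ⟨r', f', g', hf', hg', cov'⟩ := E
  have hr : r = r' := congrArg PackedMatrix.p h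
  subst hr
  set D : SD P Q := ⟨r, f, g, hf, hg, cov⟩ with hD
  set E : SD P Q := ⟨r, f', g', hf', hg', cov'⟩ with hE
  have he : ∀ (i : Fin r) (j : Fin (P.q + Q.q)),
      D.toMatrix.entry i j = E.toMatrix.entry i j := fun i j =>
    PackedMatrix.entry_congr h rfl rfl i j
  have hff' : ∀ t, (∃ i, f i = t) ↔ (∃ i, f' i = t) := by
    intro t
    constructor
    · rintro ⟨i, rfl⟩
      by_contra hno
      obtain ⟨j, hj⟩ := P.rows_nonzero i
      exact hj (by rw [← D.entry_left i j, he, E.entry_left_zero _ hno])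
    · rintro ⟨i, rfl⟩
      by_contra hno
      obtain ⟨j, hj⟩ := P.rows_nonzero i
      exact hj (by rw [← E.entry_left i j, ← he, D.entry_left_zero _ hno])
  have hgg' : ∀ t, (∃ i, g i = t) ↔ (∃ i, g' i = t) := by
    intro t
    constructor
    · rintro ⟨i, rfl⟩
      by_contra hno
      obtain ⟨j, hj⟩ := Q.rows_nonzero i
      exact hj (by rw [← D.entry_right i j, he, E.entry_right_zero _ hno])
    · rintro ⟨i, rfl⟩
      by_contra hno
      obtain ⟨j, hj⟩ := Q.rows_nonzero i
      exact hj (by rw [← E.entry_right i j, ← he, D.entry_right_zero _ hno])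
  have h1 : f = f' := strictMono_eq_of_range_eq hf hf' hff'
  have h2 : g = g' := strictMono_eq_of_range_eq hg hg' hgg'
  subst h1; subst h2
  rfl

lemma toMatrix_mem (D : SD P Q) : D.toMatrix ∈ AugShuffle P Q := by
  refine ⟨rfl, D.f, D.g, D.hf, D.hg, D.cover, ?_, ?_, ?_, ?_⟩
  · intro i j
    exact D.entry_left i j
  · intro i hi j
    exact D.entry_left_zero i hi j
  · intro i j
    exact D.entry_right i j
  · intro i hi j
    exact D.entry_right_zero i hi j

lemma augShuffle_eq_range : AugShuffle P Q = Set.range (toMatrix (P := P) (Q := Q)) := by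
  ext R
  constructor
  · rintro ⟨h, f, g, hf, hg, cov, hPe, hPz, hQe, hQz⟩
    refine ⟨⟨R.p, f, g, hf, hg, cov⟩, PackedMatrix.ext' rfl h.symm ?_⟩
    intro i j
    induction j using Fin.addCases with
    | left j₁ =>
      by_cases hi : ∃ i', f i' = i
      · obtain ⟨i₀, rfl⟩ := hi
        exact (SD.entry_left ⟨R.p, f, g, hf, hg, cov⟩ i₀ j₁).trans (hPe i₀ j₁).symm
      · exact (SD.entry_left_zero ⟨R.p, f, g, hf, hg, cov⟩ i hi j₁).trans
          (hPz i hi j₁).symm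
    | right j₂ =>
      by_cases hi : ∃ i', g i' = i
      · obtain ⟨i₀, rfl⟩ := hi
        exact (SD.entry_right ⟨R.p, f, g, hf, hg, cov⟩ i₀ j₂).trans (hQe i₀ j₂).symm
      · exact (SD.entry_right_zero ⟨R.p, f, g, hf, hg, cov⟩ i hi j₂).trans
          (hQz i hi j₂).symm
  · rintro ⟨D, rfl⟩
    exact toMatrix_mem D

lemma rowSums_toMatrix (D : SD P Q) (t : Fin D.r) :
    rowSums D.toMatrix t =
      (if h : ∃ i, D.f i = t then rowSums P h.choose else 0) +
      (if h : ∃ i, D.g i = t then rowSums Q h.choose else 0) := by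
  show (∑ j : Fin (P.q + Q.q), D.toMatrix.entry t j) = _
  refine (Fin.sum_univ_add _).trans ?_
  congr 1
  · by_cases h : ∃ i, D.f i = t
    · rw [dif_pos h]
      conv_lhs => rw [← h.choose_spec]
      exact Finset.sum_congr rfl fun j _ => D.entry_left h.choose j
    · rw [dif_neg h]
      exact Finset.sum_eq_zero fun j _ => D.entry_left_zero t h j
  · by_cases h : ∃ i, D.g i = t
    · rw [dif_pos h]
      conv_lhs => rw [← h.choose_spec]
      exact Finset.sum_congr rfl fun j _ => D.entry_right h.choose j
    · rw [dif_neg h]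
      exact Finset.sum_eq_zero fun j _ => D.entry_right_zero t h j

lemma prod_pow_rowSums (N : ℕ) (D : SD P Q) (c : Fin D.r → Fin N) :
    (∏ t, MvPolynomial.X (c t) ^ rowSums D.toMatrix t : MvPolynomial (Fin N) ℚ) =
      (∏ i, MvPolynomial.X (c (D.f i)) ^ rowSums P i) *
      (∏ i, MvPolynomial.X (c (D.g i)) ^ rowSums Q i) := by
  have key : ∀ {m : ℕ} (u : Fin m → Fin D.r), StrictMono u →
      ∀ w : Fin m → ℕ,
      (∏ t, MvPolynomial.X (c t) ^
        (if h : ∃ i, u i = t then w h.choose else 0) : MvPolynomial (Fin N) ℚ) =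
        ∏ i, MvPolynomial.X (c (u i)) ^ w i := by
    intro m u hu w
    rw [← Finset.prod_subset (Finset.subset_univ (Finset.image u Finset.univ))
      (fun t _ ht => by
        have hne : ¬ ∃ i, u i = t := by
          intro ⟨i, hi⟩; exact ht (Finset.mem_image.2 ⟨i, Finset.mem_univ _, hi⟩)
        rw [dif_neg hne, pow_zero])]
    rw [Finset.prod_image (fun x _ y _ hxy => hu.injective hxy)]
    refine Finset.prod_congr rfl fun i _ => ?_
    have h : ∃ i', u i' = u i := ⟨i, rfl⟩
    rw [dif_pos h, hu.injective h.choose_spec]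
  calc (∏ t, MvPolynomial.X (c t) ^ rowSums D.toMatrix t : MvPolynomial (Fin N) ℚ)
      = ∏ t, (MvPolynomial.X (c t) ^ (if h : ∃ i, D.f i = t then rowSums P h.choose else 0) *
          MvPolynomial.X (c t) ^ (if h : ∃ i, D.g i = t then rowSums Q h.choose else 0)) := by
        refine Finset.prod_congr rfl fun t _ => ?_
        rw [D.rowSums_toMatrix t, pow_add]
    _ = _ := by
        rw [Finset.prod_mul_distrib, key D.f D.hf (rowSums P), key D.g D.hg (rowSums Q)]

end SD

section Decomp

variable {N : ℕ} {P Q : PackedMatrix}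

/-- The union of the ranges of `a` and `b`. -/
def mergeSet {mp mq : ℕ} (a : Fin mp → Fin N) (b : Fin mq → Fin N) : Finset (Fin N) :=
  Finset.image a Finset.univ ∪ Finset.image b Finset.univ

lemma mem_mergeSet_left {mp mq : ℕ} (a : Fin mp → Fin N) (b : Fin mq → Fin N) (i : Fin mp) :
    a i ∈ mergeSet a b :=
  Finset.mem_union_left _ (Finset.mem_image.2 ⟨i, Finset.mem_univ _, rfl⟩)

lemma mem_mergeSet_right {mp mq : ℕ} (a : Fin mp → Fin N) (b : Fin mq → Fin N) (i : Fin mq) :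
    b i ∈ mergeSet a b :=
  Finset.mem_union_right _ (Finset.mem_image.2 ⟨i, Finset.mem_univ _, rfl⟩)

/-- Index of `u i` in the finset `s`. -/
def idxMap {m : ℕ} (s : Finset (Fin N)) (u : Fin m → Fin N) (hu : ∀ i, u i ∈ s) :
    Fin m → Fin s.card := fun i => (s.orderIsoOfFin rfl).symm ⟨u i, hu i⟩

lemma orderEmbOfFin_idxMap {m : ℕ} (s : Finset (Fin N)) (u : Fin m → Fin N)
    (hu : ∀ i, u i ∈ s) (i : Fin m) :
    s.orderEmbOfFin rfl (idxMap s u hu i) = u i := by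
  rw [idxMap, ← Finset.coe_orderIsoOfFin_apply, OrderIso.apply_symm_apply]

lemma idxMap_strictMono {m : ℕ} (s : Finset (Fin N)) (u : Fin m → Fin N)
    (hu : ∀ i, u i ∈ s) (hmono : StrictMono u) : StrictMono (idxMap s u hu) := by
  intro i i' h
  exact (OrderIso.lt_iff_lt _).2 (Subtype.mk_lt_mk.2 (hmono h))

/-- The canonical decomposition of a pair of strictly monotone maps. -/
def decomp (P Q : PackedMatrix) (a : Fin P.p → Fin N) (b : Fin Q.p → Fin N)
    (ha : StrictMono a) (hb : StrictMono b) : Σ D : SD P Q, (Fin D.r → Fin N) :=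
  ⟨{ r := (mergeSet a b).card
     f := idxMap (mergeSet a b) a (mem_mergeSet_left a b)
     g := idxMap (mergeSet a b) b (mem_mergeSet_right a b)
     hf := idxMap_strictMono _ _ _ ha
     hg := idxMap_strictMono _ _ _ hb
     cover := by
       intro t
       have hmem : (mergeSet a b).orderEmbOfFin rfl t ∈ mergeSet a b :=
         Finset.orderEmbOfFin_mem _ rfl t
       rcases Finset.mem_union.1 hmem with hm | hm
       · obtain ⟨i, _, hi⟩ := Finset.mem_image.1 hm
         refine Or.inl ⟨i, ((mergeSet a b).orderEmbOfFin rfl).injective ?_⟩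
         rw [orderEmbOfFin_idxMap, hi]
       · obtain ⟨i, _, hi⟩ := Finset.mem_image.1 hm
         refine Or.inr ⟨i, ((mergeSet a b).orderEmbOfFin rfl).injective ?_⟩
         rw [orderEmbOfFin_idxMap, hi] },
   fun t => (mergeSet a b).orderEmbOfFin rfl t⟩

lemma decomp_c_f (a : Fin P.p → Fin N) (b : Fin Q.p → Fin N)
    (ha : StrictMono a) (hb : StrictMono b) (i : Fin P.p) :
    (decomp P Q a b ha hb).2 ((decomp P Q a b ha hb).1.f i) = a i :=
  orderEmbOfFin_idxMap _ _ _ i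

lemma decomp_c_g (a : Fin P.p → Fin N) (b : Fin Q.p → Fin N)
    (ha : StrictMono a) (hb : StrictMono b) (i : Fin Q.p) :
    (decomp P Q a b ha hb).2 ((decomp P Q a b ha hb).1.g i) = b i :=
  orderEmbOfFin_idxMap _ _ _ i

lemma decomp_c_strictMono (a : Fin P.p → Fin N) (b : Fin Q.p → Fin N)
    (ha : StrictMono a) (hb : StrictMono b) :
    StrictMono (decomp P Q a b ha hb).2 :=
  ((mergeSet a b).orderEmbOfFin rfl).strictMono

lemma sigma_eq (D D' : SD P Q) (c : Fin D.r → Fin N) (c' : Fin D'.r → Fin N)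
    (hr : D.r = D'.r)
    (hfv : ∀ i, ((D.f i : ℕ)) = (D'.f i : ℕ))
    (hgv : ∀ i, ((D.g i : ℕ)) = (D'.g i : ℕ))
    (hcv : ∀ (t : Fin D.r) (t' : Fin D'.r), (t : ℕ) = (t' : ℕ) → c t = c' t') :
    (⟨D, c⟩ : Σ D : SD P Q, (Fin D.r → Fin N)) = ⟨D', c'⟩ := by
  obtain ⟨r, f, g, hf, hg, cov⟩ := D
  obtain ⟨r', f', g', hf', hg', cov'⟩ := D'
  dsimp at hr hfv hgv hcv
  subst hr
  have h1 : f = f' := funext fun i => Fin.ext (hfv i)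
  have h2 : g = g' := funext fun i => Fin.ext (hgv i)
  subst h1; subst h2
  have h3 : c = c' := funext fun t => hcv t t rfl
  subst h3
  rfl

lemma decomp_eq (D : SD P Q) (c : Fin D.r → Fin N) (hc : StrictMono c)
    (a : Fin P.p → Fin N) (b : Fin Q.p → Fin N) (ha : StrictMono a) (hb : StrictMono b)
    (haf : ∀ i, a i = c (D.f i)) (hbg : ∀ i, b i = c (D.g i)) :
    decomp P Q a b ha hb = ⟨D, c⟩ := by
  have hs : mergeSet a b = Finset.image c Finset.univ := by
    ext x
    simp only [mergeSet, Finset.mem_union, Finset.mem_image, Finset.mem_univ, true_and]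
    constructor
    · rintro (⟨i, hi⟩ | ⟨i, hi⟩)
      · exact ⟨D.f i, by rw [← haf i, hi]⟩
      · exact ⟨D.g i, by rw [← hbg i, hi]⟩
    · rintro ⟨t, rfl⟩
      rcases D.cover t with ⟨i, hi⟩ | ⟨i, hi⟩
      · exact Or.inl ⟨i, by rw [haf i, hi]⟩
      · exact Or.inr ⟨i, by rw [hbg i, hi]⟩
  have hcard : (mergeSet a b).card = D.r := by
    rw [hs, Finset.card_image_of_injective _ hc.injective, Finset.card_univ, Fintype.card_fin]
  have hcast : StrictMono (fun t : Fin (mergeSet a b).card => c (Fin.cast hcard t)) := by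
    intro t t' h
    exact hc h
  have hc' : ∀ t : Fin (mergeSet a b).card,
      (mergeSet a b).orderEmbOfFin rfl t = c (Fin.cast hcard t) := by
    have huniq : (fun t : Fin (mergeSet a b).card => c (Fin.cast hcard t)) =
        (mergeSet a b).orderEmbOfFin rfl := by
      apply Finset.orderEmbOfFin_unique
      · intro x
        have hsub : Finset.image c Finset.univ ⊆ mergeSet a b := le_of_eq hs.symm
        exact hsub (Finset.mem_image.2 ⟨_, Finset.mem_univ _, rfl⟩)
      · exact hcast
    intro t
    rw [← huniq]
  refine sigma_eq _ _ _ _ hcard ?_ ?_ ?_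
  · intro i
    have h1 : (mergeSet a b).orderEmbOfFin rfl ((decomp P Q a b ha hb).1.f i) = a i :=
      orderEmbOfFin_idxMap _ _ _ i
    have h1 := (hc' ((decomp P Q a b ha hb).1.f i)).symm.trans (h1.trans (haf i))
    exact congrArg Fin.val (hc.injective h1)
  · intro i
    have h1 : (mergeSet a b).orderEmbOfFin rfl ((decomp P Q a b ha hb).1.g i) = b i :=
      orderEmbOfFin_idxMap _ _ _ i
    have h1 := (hc' ((decomp P Q a b ha hb).1.g i)).symm.trans (h1.trans (hbg i))
    exact congrArg Fin.val (hc.injective h1)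
  · intro t t' htv
    show (mergeSet a b).orderEmbOfFin rfl t = c t'
    rw [hc']
    congr 1
    exact Fin.ext htv

end Decomp
end

noncomputable section MainProof

/-- `Σ_{R ∈ ⧢(P,Q)} M_{Row(R)} = M_{Row(P)} · M_{Row(Q)}` : the evaluation
`MS_P ↦ M_{Row(P)}` is an algebra homomorphism from `MQSym` onto quasi-symmetric functions. -/
theorem row_evaluation_hom (N : ℕ) (hN : 1 ≤ N) (P Q : PackedMatrix) :
    ∑ᶠ R ∈ AugShuffle P Q, MQS N (rowSums R) =
      MQS N (rowSums P) * MQS N (rowSums Q) := by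
  rw [SD.augShuffle_eq_range, finsum_mem_range SD.toMatrix_injective,
    finsum_eq_sum_of_fintype]
  simp only [MQS]
  rw [Finset.sum_mul_sum]
  have hstep : (∑ D : SD P Q,
      ∑ c ∈ Finset.univ.filter (fun c : Fin D.toMatrix.p → Fin N => StrictMono c),
        (∏ t, MvPolynomial.X (c t) ^ rowSums D.toMatrix t : MvPolynomial (Fin N) ℚ))
      = ∑ x ∈ (Finset.univ : Finset (SD P Q)).sigma
          (fun D => Finset.univ.filter (fun c : Fin D.r → Fin N => StrictMono c)),
          ((∏ i, MvPolynomial.X (x.2 (x.1.f i)) ^ rowSums P i : MvPolynomial (Fin N) ℚ) *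
            ∏ i, MvPolynomial.X (x.2 (x.1.g i)) ^ rowSums Q i) := by
    rw [Finset.sum_sigma]
    exact Finset.sum_congr rfl fun D _ =>
      Finset.sum_congr rfl fun c _ => SD.prod_pow_rowSums N D c
  rw [hstep]
  refine Eq.trans ?_ (Finset.sum_product _ _
    (fun y : (Fin P.p → Fin N) × (Fin Q.p → Fin N) =>
      (∏ t, MvPolynomial.X (y.1 t) ^ rowSums P t : MvPolynomial (Fin N) ℚ) *
        ∏ t, MvPolynomial.X (y.2 t) ^ rowSums Q t))
  refine Finset.sum_bij'
    (fun x _ => ((fun i => x.2 (x.1.f i)), (fun i => x.2 (x.1.g i))))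
    (fun y hy => decomp P Q y.1 y.2
      (Finset.mem_filter.1 (Finset.mem_product.1 hy).1).2
      (Finset.mem_filter.1 (Finset.mem_product.1 hy).2).2)
    ?_ ?_ ?_ ?_ ?_
  · intro x hx
    have hc : StrictMono x.2 :=
      (Finset.mem_filter.1 (Finset.mem_sigma.1 hx).2).2
    refine Finset.mem_product.2 ⟨?_, ?_⟩
    · exact Finset.mem_filter.2 ⟨Finset.mem_univ _, hc.comp x.1.hf⟩
    · exact Finset.mem_filter.2 ⟨Finset.mem_univ _, hc.comp x.1.hg⟩
  · intro y hy
    refine Finset.mem_sigma.2 ⟨Finset.mem_univ _, ?_⟩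
    exact Finset.mem_filter.2 ⟨Finset.mem_univ _, decomp_c_strictMono _ _ _ _⟩
  · intro x hx
    obtain ⟨D, c⟩ := x
    have hc : StrictMono c :=
      (Finset.mem_filter.1 (Finset.mem_sigma.1 hx).2).2
    exact decomp_eq D c hc _ _ _ _ (fun _ => rfl) (fun _ => rfl)
  · intro y hy
    exact Prod.ext (funext fun i => decomp_c_f _ _ _ _ i) (funext fun i => decomp_c_g _ _ _ _ i)
  · intro x hx
    rfl

end MainProof
end

section
/- For every d ≥ 1, the number of packed matrices of degree d (which is the dimension of the homogeneous component MQSym_d of the algebra of matrix quasi-symmetric functions) equals the sum of the convergent double series Σ_{l=1}^∞ Σ_{h=1}^∞ (1/2)^{l+h+2} · binom(d+lh−1, lh−1). -/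
/-- The degree of a packed matrix: the sum of its entries. -/
def PackedMatrix.degree (P : PackedMatrix) : ℕ :=
  ∑ i, ∑ j, P.entry i j

set_option linter.unusedVariables false

open Finset

def msum {L H : ℕ} (A : Fin L → Fin H → ℕ) : ℕ := ∑ i, ∑ j, A i j

def IsPacked {L H : ℕ} (A : Fin L → Fin H → ℕ) : Prop :=
  (∀ i, ∃ j, A i j ≠ 0) ∧ (∀ j, ∃ i, A i j ≠ 0)

/-- stars and bars equiv -/
noncomputable def tupleSymEquiv (n d : ℕ) :
    {f : Fin n → ℕ // ∑ i, f i = d} ≃ Sym (Fin n) d := by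
  unfold Sym
  refine Equiv.subtypeEquiv (Finsupp.equivFunOnFinite.symm.trans Multiset.toFinsupp.symm.toEquiv) ?_
  intro f
  simp only [Equiv.trans_apply, AddEquiv.toEquiv_symm, AddEquiv.coe_toEquiv_symm]
  have : Multiset.card (Multiset.toFinsupp.symm (Finsupp.equivFunOnFinite.symm f)) =
      ∑ i, f i := by
    show Multiset.card (Finsupp.toMultiset _) = _
    rw [Finsupp.card_toMultiset, Finsupp.sum_fintype]
    · simp
    · simp
  rw [show Multiset.toFinsupp.symm.toEquiv (Finsupp.equivFunOnFinite.symm f) = Multiset.toFinsupp.symm (Finsupp.equivFunOnFinite.symm f) from rfl, this]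

lemma card_tuple (n d : ℕ) :
    Nat.card {f : Fin n → ℕ // ∑ i, f i = d} = (n + d - 1).choose d := by
  rw [Nat.card_congr (tupleSymEquiv n d), Nat.card_eq_fintype_card,
    Sym.card_sym_eq_choose, Fintype.card_fin]

noncomputable def matTupleEquiv (L H d : ℕ) :
    {A : Fin L → Fin H → ℕ // msum A = d} ≃ {f : Fin (L * H) → ℕ // ∑ i, f i = d} := by
  refine Equiv.subtypeEquiv ((Equiv.curry _ _ _).symm.trans
    (Equiv.arrowCongr (finProdFinEquiv (m := L) (n := H)) (Equiv.refl ℕ))) ?_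
  intro A
  have h1 := Equiv.sum_comp (finProdFinEquiv (m := L) (n := H)).symm
    (fun p : Fin L × Fin H => A p.1 p.2)
  have h2 : msum A = ∑ p : Fin L × Fin H, A p.1 p.2 := by
    rw [msum, Fintype.sum_prod_type]
  have : ∑ k : Fin (L * H), A (finProdFinEquiv.symm k).1 (finProdFinEquiv.symm k).2 = msum A := by
    rw [h2]; exact h1
  rw [← this]
  rfl

section supp
variable {L H : ℕ}

def rowSupp (A : Fin L → Fin H → ℕ) : Finset (Fin L) :=
  univ.filter (fun i => ∃ j, A i j ≠ 0)

def colSupp (A : Fin L → Fin H → ℕ) : Finset (Fin H) :=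
  univ.filter (fun j => ∃ i, A i j ≠ 0)

lemma mem_rowSupp {A : Fin L → Fin H → ℕ} {i : Fin L} :
    i ∈ rowSupp A ↔ ∃ j, A i j ≠ 0 := by simp [rowSupp]

lemma mem_colSupp {A : Fin L → Fin H → ℕ} {j : Fin H} :
    j ∈ colSupp A ↔ ∃ i, A i j ≠ 0 := by simp [colSupp]

/-- restriction of a matrix to row set R and column set C -/
def restrictM (R : Finset (Fin L)) (C : Finset (Fin H)) (A : Fin L → Fin H → ℕ) :
    Fin R.card → Fin C.card → ℕ :=
  fun i j => A (R.orderIsoOfFin rfl i) (C.orderIsoOfFin rfl j)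

/-- extension of a small matrix by zeros -/
def extend (R : Finset (Fin L)) (C : Finset (Fin H))
    (B : Fin R.card → Fin C.card → ℕ) : Fin L → Fin H → ℕ :=
  fun i j =>
    if hi : i ∈ R then
      if hj : j ∈ C then
        B ((R.orderIsoOfFin rfl).symm ⟨i, hi⟩) ((C.orderIsoOfFin rfl).symm ⟨j, hj⟩)
      else 0
    else 0

lemma extend_apply_mem {R : Finset (Fin L)} {C : Finset (Fin H)}
    (B : Fin R.card → Fin C.card → ℕ) {i : Fin L} {j : Fin H} (hi : i ∈ R) (hj : j ∈ C) :
    extend R C B i j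
      = B ((R.orderIsoOfFin rfl).symm ⟨i, hi⟩) ((C.orderIsoOfFin rfl).symm ⟨j, hj⟩) := by
  rw [extend, dif_pos hi, dif_pos hj]

lemma extend_apply_iso {R : Finset (Fin L)} {C : Finset (Fin H)}
    (B : Fin R.card → Fin C.card → ℕ) (i' : Fin R.card) (j' : Fin C.card) :
    extend R C B (R.orderIsoOfFin rfl i') (C.orderIsoOfFin rfl j') = B i' j' := by
  rw [extend_apply_mem B (R.orderIsoOfFin rfl i').2 (C.orderIsoOfFin rfl j').2]
  congr 1
  · rw [show (⟨(R.orderIsoOfFin rfl i' : Fin L), (R.orderIsoOfFin rfl i').2⟩ : {x // x ∈ R})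
      = R.orderIsoOfFin rfl i' from rfl, OrderIso.symm_apply_apply]
  · rw [show (⟨(C.orderIsoOfFin rfl j' : Fin H), (C.orderIsoOfFin rfl j').2⟩ : {x // x ∈ C})
      = C.orderIsoOfFin rfl j' from rfl, OrderIso.symm_apply_apply]

lemma extend_apply_not_row {R : Finset (Fin L)} {C : Finset (Fin H)}
    (B : Fin R.card → Fin C.card → ℕ) {i : Fin L} (hi : i ∉ R) (j : Fin H) :
    extend R C B i j = 0 := by rw [extend, dif_neg hi]

lemma extend_apply_not_col {R : Finset (Fin L)} {C : Finset (Fin H)}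
    (B : Fin R.card → Fin C.card → ℕ) (i : Fin L) {j : Fin H} (hj : j ∉ C) :
    extend R C B i j = 0 := by
  simp [extend, hj]

/-- sum over supports: a matrix vanishing off R × C has msum equal to the sum over R, C -/
lemma msum_eq_sum_over (R : Finset (Fin L)) (C : Finset (Fin H)) (A : Fin L → Fin H → ℕ)
    (hv : ∀ i j, A i j ≠ 0 → i ∈ R ∧ j ∈ C) :
    msum A = ∑ i ∈ R, ∑ j ∈ C, A i j := by
  rw [msum]
  rw [← Finset.sum_subset (Finset.subset_univ R)]
  · refine Finset.sum_congr rfl fun i _ => ?_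
    rw [← Finset.sum_subset (Finset.subset_univ C)]
    intro j _ hj
    by_contra h
    exact hj (hv i j h).2
  · intro i _ hi
    refine Finset.sum_eq_zero fun j _ => ?_
    by_contra h
    exact hi (hv i j h).1

lemma sum_over_eq_msum_restrictM (R : Finset (Fin L)) (C : Finset (Fin H))
    (A : Fin L → Fin H → ℕ) :
    ∑ i ∈ R, ∑ j ∈ C, A i j = msum (restrictM R C A) := by
  rw [← Finset.sum_coe_sort R, msum]
  refine (Fintype.sum_equiv (R.orderIsoOfFin rfl).toEquiv
    (fun i' => ∑ j', restrictM R C A i' j')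
    (fun x : {x // x ∈ R} => ∑ j ∈ C, A x j) ?_).symm
  intro i'
  rw [← Finset.sum_coe_sort C]
  exact Fintype.sum_equiv (C.orderIsoOfFin rfl).toEquiv
    (fun j' => restrictM R C A i' j')
    (fun y : {y // y ∈ C} => A ((R.orderIsoOfFin rfl).toEquiv i') y) (fun j' => rfl)

lemma msum_extend (R : Finset (Fin L)) (C : Finset (Fin H))
    (B : Fin R.card → Fin C.card → ℕ) : msum (extend R C B) = msum B := by
  rw [msum_eq_sum_over R C (extend R C B) (fun i j h => by
    constructor
    · by_contra hi; exact h (extend_apply_not_row B hi j)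
    · by_contra hj; exact h (extend_apply_not_col B i hj)),
    sum_over_eq_msum_restrictM]
  unfold msum restrictM
  simp only [extend_apply_iso]

lemma msum_restrictM_supp (A : Fin L → Fin H → ℕ) :
    msum (restrictM (rowSupp A) (colSupp A) A) = msum A := by
  rw [← sum_over_eq_msum_restrictM, ← msum_eq_sum_over]
  intro i j h
  exact ⟨mem_rowSupp.2 ⟨j, h⟩, mem_colSupp.2 ⟨i, h⟩⟩

lemma isPacked_restrictM_supp (A : Fin L → Fin H → ℕ) :
    IsPacked (restrictM (rowSupp A) (colSupp A) A) := by
  constructor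
  · intro i'
    have hi : ((rowSupp A).orderIsoOfFin rfl i' : Fin L) ∈ rowSupp A :=
      ((rowSupp A).orderIsoOfFin rfl i').2
    obtain ⟨j, hj⟩ := mem_rowSupp.1 hi
    have hjc : j ∈ colSupp A := mem_colSupp.2 ⟨_, hj⟩
    refine ⟨((colSupp A).orderIsoOfFin rfl).symm ⟨j, hjc⟩, ?_⟩
    unfold restrictM
    rwa [OrderIso.apply_symm_apply]
  · intro j'
    have hj : ((colSupp A).orderIsoOfFin rfl j' : Fin H) ∈ colSupp A :=
      ((colSupp A).orderIsoOfFin rfl j').2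
    obtain ⟨i, hi⟩ := mem_colSupp.1 hj
    have hic : i ∈ rowSupp A := mem_rowSupp.2 ⟨_, hi⟩
    refine ⟨((rowSupp A).orderIsoOfFin rfl).symm ⟨i, hic⟩, ?_⟩
    unfold restrictM
    rwa [OrderIso.apply_symm_apply]

lemma extend_restrictM_supp (A : Fin L → Fin H → ℕ) :
    extend (rowSupp A) (colSupp A) (restrictM (rowSupp A) (colSupp A) A) = A := by
  funext i j
  by_cases hi : i ∈ rowSupp A
  · by_cases hj : j ∈ colSupp A
    · rw [extend_apply_mem _ hi hj]
      unfold restrictM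
      rw [OrderIso.apply_symm_apply, OrderIso.apply_symm_apply]
    · rw [extend_apply_not_col _ _ hj]
      by_contra h
      exact hj (mem_colSupp.2 ⟨i, fun hh => h hh.symm⟩)
  · rw [extend_apply_not_row _ hi]
    by_contra h
    exact hi (mem_rowSupp.2 ⟨j, fun hh => h hh.symm⟩)

lemma restrictM_extend (R : Finset (Fin L)) (C : Finset (Fin H))
    (B : Fin R.card → Fin C.card → ℕ) : restrictM R C (extend R C B) = B := by
  funext i' j'
  unfold restrictM
  rw [extend_apply_iso]

lemma rowSupp_extend (R : Finset (Fin L)) (C : Finset (Fin H))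
    (B : Fin R.card → Fin C.card → ℕ) (hB : IsPacked B) : rowSupp (extend R C B) = R := by
  ext i
  rw [mem_rowSupp]
  constructor
  · rintro ⟨j, hj⟩
    by_contra hi
    exact hj (extend_apply_not_row B hi j)
  · intro hi
    obtain ⟨j', hj'⟩ := hB.1 ((R.orderIsoOfFin rfl).symm ⟨i, hi⟩)
    refine ⟨C.orderIsoOfFin rfl j', ?_⟩
    rw [extend_apply_mem B hi (C.orderIsoOfFin rfl j').2]
    rw [show (⟨(C.orderIsoOfFin rfl j' : Fin H), (C.orderIsoOfFin rfl j').2⟩ : {x // x ∈ C})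
      = C.orderIsoOfFin rfl j' from rfl, OrderIso.symm_apply_apply]
    exact hj'

lemma colSupp_extend (R : Finset (Fin L)) (C : Finset (Fin H))
    (B : Fin R.card → Fin C.card → ℕ) (hB : IsPacked B) : colSupp (extend R C B) = C := by
  ext j
  rw [mem_colSupp]
  constructor
  · rintro ⟨i, hi⟩
    by_contra hj
    exact hi (extend_apply_not_col B i hj)
  · intro hj
    obtain ⟨i', hi'⟩ := hB.2 ((C.orderIsoOfFin rfl).symm ⟨j, hj⟩)
    refine ⟨R.orderIsoOfFin rfl i', ?_⟩
    rw [extend_apply_mem B (R.orderIsoOfFin rfl i').2 hj]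
    rw [show (⟨(R.orderIsoOfFin rfl i' : Fin L), (R.orderIsoOfFin rfl i').2⟩ : {x // x ∈ R})
      = R.orderIsoOfFin rfl i' from rfl, OrderIso.symm_apply_apply]
    exact hi'

end supp

section equivs
variable {L H : ℕ}

/-- matrices with prescribed supports ≃ packed matrices -/
def fixedSuppEquiv (R : Finset (Fin L)) (C : Finset (Fin H)) (d : ℕ) :
    {A : Fin L → Fin H → ℕ // (rowSupp A = R ∧ colSupp A = C) ∧ msum A = d} ≃
      {B : Fin R.card → Fin C.card → ℕ // IsPacked B ∧ msum B = d} where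
  toFun A := ⟨restrictM R C A.1, by
    obtain ⟨A, ⟨h1, h2⟩, h3⟩ := A
    subst h1; subst h2
    exact ⟨isPacked_restrictM_supp A, by rw [msum_restrictM_supp]; exact h3⟩⟩
  invFun B := ⟨extend R C B.1, by
    obtain ⟨B, h1, h2⟩ := B
    refine ⟨⟨rowSupp_extend R C B h1, colSupp_extend R C B h1⟩, ?_⟩
    rw [msum_extend]; exact h2⟩
  left_inv := by
    rintro ⟨A, ⟨h1, h2⟩, h3⟩
    subst h1; subst h2
    exact Subtype.ext (extend_restrictM_supp A)
  right_inv := by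
    rintro ⟨B, h1, h2⟩
    exact Subtype.ext (restrictM_extend R C B)

/-- the master decomposition -/
noncomputable def decompEquiv (L H d : ℕ) :
    {A : Fin L → Fin H → ℕ // msum A = d} ≃
      Σ s : Finset (Fin L) × Finset (Fin H),
        {B : Fin s.1.card → Fin s.2.card → ℕ // IsPacked B ∧ msum B = d} := by
  refine ((Equiv.sigmaFiberEquiv
    (fun A : {A : Fin L → Fin H → ℕ // msum A = d} => (rowSupp A.1, colSupp A.1))).symm.trans
    (Equiv.sigmaCongrRight fun s => ?_))
  refine Equiv.trans ?_ (fixedSuppEquiv s.1 s.2 d)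
  refine Equiv.trans (Equiv.subtypeSubtypeEquivSubtypeInter (fun A : Fin L → Fin H → ℕ => msum A = d) (fun A => (rowSupp A, colSupp A) = s)) (Equiv.subtypeEquivRight ?_)
  intro A
  rw [Prod.ext_iff]
  tauto

end equivs

section counting

noncomputable instance msumFintype (L H d : ℕ) :
    Fintype {A : Fin L → Fin H → ℕ // msum A = d} :=
  Fintype.ofEquiv _ ((matTupleEquiv L H d).trans (tupleSymEquiv (L * H) d)).symm

instance packedFinite (L H d : ℕ) :
    Finite {A : Fin L → Fin H → ℕ // IsPacked A ∧ msum A = d} := by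
  apply Finite.of_injective
    (fun A : {A : Fin L → Fin H → ℕ // IsPacked A ∧ msum A = d} =>
      (⟨A.1, A.2.2⟩ : {A : Fin L → Fin H → ℕ // msum A = d}))
  intro A B h
  simp only [Subtype.mk.injEq] at h
  exact Subtype.ext h

/-- number of packed matrices of shape p × q and degree d -/
noncomputable def PackedCount (p q d : ℕ) : ℕ :=
  Nat.card {A : Fin p → Fin q → ℕ // IsPacked A ∧ msum A = d}

lemma nat_card_sigma {ι : Type*} [Fintype ι] (F : ι → Type*) [∀ i, Finite (F i)] :
    Nat.card (Σ i, F i) = ∑ i, Nat.card (F i) := by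
  letI : ∀ i, Fintype (F i) := fun i => Fintype.ofFinite _
  simp only [Nat.card_eq_fintype_card, Fintype.card_sigma]

lemma card_mat (L H d : ℕ) :
    Nat.card {A : Fin L → Fin H → ℕ // msum A = d} = (L * H + d - 1).choose d := by
  rw [Nat.card_congr (matTupleEquiv L H d), card_tuple]

lemma card_mat_decomp (L H d : ℕ) :
    (L * H + d - 1).choose d =
      ∑ p ∈ Finset.range (L + 1), ∑ q ∈ Finset.range (H + 1),
        L.choose p * (H.choose q * PackedCount p q d) := by
  rw [← card_mat L H d, Nat.card_congr (decompEquiv L H d), nat_card_sigma]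
  rw [Fintype.sum_prod_type]
  have : ∀ R : Finset (Fin L), ∀ C : Finset (Fin H),
      Nat.card {B : Fin R.card → Fin C.card → ℕ // IsPacked B ∧ msum B = d}
        = PackedCount R.card C.card d := fun _ _ => rfl
  calc ∑ R : Finset (Fin L), ∑ C : Finset (Fin H),
        Nat.card {B : Fin R.card → Fin C.card → ℕ // IsPacked B ∧ msum B = d}
      = ∑ R : Finset (Fin L), ∑ C : Finset (Fin H), PackedCount R.card C.card d := by
        simp only [this]
    _ = ∑ R ∈ (Finset.univ : Finset (Fin L)).powerset, ∑ C ∈ (Finset.univ : Finset (Fin H)).powerset,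
          PackedCount R.card C.card d := by
        rw [Finset.powerset_univ]
        exact Finset.sum_congr rfl fun R _ => by rw [Finset.powerset_univ]
    _ = ∑ p ∈ Finset.range (L + 1), ∑ q ∈ Finset.range (H + 1),
          L.choose p * (H.choose q * PackedCount p q d) := by
        rw [Finset.sum_powerset_apply_card
          (fun m => ∑ C ∈ (Finset.univ : Finset (Fin H)).powerset, PackedCount m C.card d)]
        simp only [Finset.card_univ, Fintype.card_fin, smul_eq_mul]
        refine Finset.sum_congr rfl fun p _ => ?_
        rw [Finset.sum_powerset_apply_card (fun m => PackedCount p m d)]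
        simp only [Finset.card_univ, Fintype.card_fin, smul_eq_mul]
        rw [Finset.mul_sum]

end counting

section empt

lemma packedCount_eq_zero {p q d : ℕ} (hd : 1 ≤ d)
    (h : ¬(1 ≤ p ∧ p ≤ d ∧ 1 ≤ q ∧ q ≤ d)) : PackedCount p q d = 0 := by
  rw [PackedCount, Nat.card_eq_zero]
  left
  constructor
  rintro ⟨A, hp, hs⟩
  apply h
  have hp1 : 1 ≤ p := by
    rcases Nat.eq_zero_or_pos p with h0 | h0
    · subst h0
      have h00 : msum A = 0 := by simp [msum]
      rw [hs] at h00
      omega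
    · exact h0
  have hq1 : 1 ≤ q := by
    rcases Nat.eq_zero_or_pos q with h0 | h0
    · subst h0
      have h00 : msum A = 0 := by simp [msum]
      rw [hs] at h00
      omega
    · exact h0
  have hpd : p ≤ d := by
    have : ∀ i : Fin p, 1 ≤ ∑ j, A i j := by
      intro i
      obtain ⟨j, hj⟩ := hp.1 i
      calc 1 ≤ A i j := Nat.one_le_iff_ne_zero.2 hj
        _ ≤ ∑ j, A i j := Finset.single_le_sum (f := fun j' => A i j') (fun _ _ => Nat.zero_le _) (Finset.mem_univ j)
    calc p = ∑ _i : Fin p, 1 := by simp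
      _ ≤ ∑ i, ∑ j, A i j := Finset.sum_le_sum fun i _ => this i
      _ = d := hs
  have hqd : q ≤ d := by
    have : ∀ j : Fin q, 1 ≤ ∑ i, A i j := by
      intro j
      obtain ⟨i, hi⟩ := hp.2 j
      calc 1 ≤ A i j := Nat.one_le_iff_ne_zero.2 hi
        _ ≤ ∑ i, A i j := Finset.single_le_sum (f := fun i' => A i' j) (fun _ _ => Nat.zero_le _) (Finset.mem_univ i)
    calc q = ∑ _j : Fin q, 1 := by simp
      _ ≤ ∑ j, ∑ i, A i j := Finset.sum_le_sum fun j _ => this j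
      _ = ∑ i, ∑ j, A i j := Finset.sum_comm
      _ = d := hs
  exact ⟨hp1, hpd, hq1, hqd⟩

lemma packedEmpty {p q d : ℕ} (hd : 1 ≤ d)
    (h : ¬(1 ≤ p ∧ p ≤ d ∧ 1 ≤ q ∧ q ≤ d)) :
    IsEmpty {A : Fin p → Fin q → ℕ // IsPacked A ∧ msum A = d} := by
  have := packedCount_eq_zero hd h
  rw [PackedCount, Nat.card_eq_zero] at this
  rcases this with h1 | h1
  · exact h1
  · exact (not_finite_iff_infinite.2 h1 (packedFinite p q d)).elim

end empt

section ranges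

lemma sum_range_ext {M : Type*} [AddCommMonoid M] {f : ℕ → M} {a b : ℕ}
    (ha : ∀ m, a ≤ m → f m = 0) (hb : ∀ m, b ≤ m → f m = 0) :
    ∑ m ∈ Finset.range a, f m = ∑ m ∈ Finset.range b, f m := by
  have key : ∀ c, a ≤ c → ∑ m ∈ Finset.range a, f m = ∑ m ∈ Finset.range c, f m :=
    fun c hc => Finset.sum_subset (Finset.range_subset_range.2 hc)
      (fun x _ hx => ha x (by simpa using hx))
  have key' : ∀ c, b ≤ c → ∑ m ∈ Finset.range b, f m = ∑ m ∈ Finset.range c, f m :=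
    fun c hc => Finset.sum_subset (Finset.range_subset_range.2 hc)
      (fun x _ hx => hb x (by simpa using hx))
  rw [key (max a b) (le_max_left _ _), key' (max a b) (le_max_right _ _)]

lemma mat_decomp_fixed (L H d : ℕ) (hd : 1 ≤ d) :
    (L * H + d - 1).choose d =
      ∑ p ∈ Finset.range (d + 1), ∑ q ∈ Finset.range (d + 1),
        L.choose p * (H.choose q * PackedCount p q d) := by
  rw [card_mat_decomp L H d]
  have inner : ∀ p, ∑ q ∈ Finset.range (H + 1), L.choose p * (H.choose q * PackedCount p q d)
      = ∑ q ∈ Finset.range (d + 1), L.choose p * (H.choose q * PackedCount p q d) := by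
    intro p
    refine sum_range_ext (fun q hq => ?_) (fun q hq => ?_)
    · rw [Nat.choose_eq_zero_of_lt (by omega : H < q)]
      ring
    · rw [packedCount_eq_zero hd (by omega)]
      ring
  have outer : ∑ p ∈ Finset.range (L + 1),
        ∑ q ∈ Finset.range (d + 1), L.choose p * (H.choose q * PackedCount p q d)
      = ∑ p ∈ Finset.range (d + 1),
        ∑ q ∈ Finset.range (d + 1), L.choose p * (H.choose q * PackedCount p q d) := by
    refine sum_range_ext (fun p hp => ?_) (fun p hp => ?_)
    · refine Finset.sum_eq_zero fun q _ => ?_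
      rw [Nat.choose_eq_zero_of_lt (by omega : L < p)]
      ring
    · refine Finset.sum_eq_zero fun q _ => ?_
      rw [packedCount_eq_zero hd (by omega)]
      ring
  rw [← outer]
  exact Finset.sum_congr rfl fun p _ => inner p

end ranges

section sigmatrunc

def sigmaFinEquiv {n : ℕ} (F : ℕ → Type*) (h : ∀ m, n ≤ m → IsEmpty (F m)) :
    (Σ m : ℕ, F m) ≃ Σ i : Fin n, F i where
  toFun x := ⟨⟨x.1, by by_contra hc; exact (h x.1 (le_of_not_gt hc)).false x.2⟩, x.2⟩
  invFun x := ⟨x.1, x.2⟩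
  left_inv := fun ⟨m, y⟩ => rfl
  right_inv := fun ⟨⟨i, hi⟩, y⟩ => rfl

end sigmatrunc

section total

variable (d : ℕ)

def packedSigmaEquiv :
    {P : PackedMatrix // P.degree = d} ≃
      Σ p : ℕ, Σ q : ℕ, {A : Fin p → Fin q → ℕ // IsPacked A ∧ msum A = d} where
  toFun P := ⟨P.1.p, P.1.q, P.1.entry, ⟨P.1.rows_nonzero, P.1.cols_nonzero⟩, P.2⟩
  invFun x := ⟨⟨x.1, x.2.1, x.2.2.1, x.2.2.2.1.1, x.2.2.2.1.2⟩, x.2.2.2.2⟩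
  left_inv := fun ⟨⟨p, q, A, h1, h2⟩, h3⟩ => rfl
  right_inv := fun ⟨p, q, A, ⟨h1, h2⟩, h3⟩ => rfl

lemma card_packed_total (hd : 1 ≤ d) :
    Nat.card {P : PackedMatrix // P.degree = d} =
      ∑ p ∈ Finset.range (d + 1), ∑ q ∈ Finset.range (d + 1), PackedCount p q d := by
  rw [Nat.card_congr (packedSigmaEquiv d)]
  have e2 := Equiv.sigmaCongrRight (fun p : ℕ =>
    sigmaFinEquiv (n := d + 1) (fun q => {A : Fin p → Fin q → ℕ // IsPacked A ∧ msum A = d})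
      (fun q hq => packedEmpty (p := p) (q := q) hd (by omega)))
  rw [Nat.card_congr e2]
  have e3 := sigmaFinEquiv (n := d + 1)
    (fun p => Σ qi : Fin (d + 1), {A : Fin p → Fin qi → ℕ // IsPacked A ∧ msum A = d})
    (fun p hp => ⟨fun x => (packedEmpty hd (by omega : ¬(1 ≤ p ∧ p ≤ d ∧ 1 ≤ (x.1 : ℕ) ∧ (x.1 : ℕ) ≤ d))).false x.2⟩)
  rw [Nat.card_congr e3, nat_card_sigma]
  rw [← Fin.sum_univ_eq_sum_range (fun p => ∑ q ∈ Finset.range (d + 1), PackedCount p q d)]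
  refine Finset.sum_congr rfl fun pi _ => ?_
  rw [nat_card_sigma]
  rw [← Fin.sum_univ_eq_sum_range (fun q => PackedCount pi q d)]
  rfl

end total

section analytic

lemma keySum (q : ℕ) (hq : 1 ≤ q) :
    HasSum (fun h : ℕ => (1 / 2 : ℝ) ^ (h + 2) * ((h + 1).choose q : ℝ)) 1 := by
  have hr : ‖(1 / 2 : ℝ)‖ < 1 := by rw [Real.norm_eq_abs]; rw [abs_of_pos] <;> norm_num
  have base := hasSum_choose_mul_geometric_of_norm_lt_one (𝕜 := ℝ) q hr
  have hval : (1 / (1 - (1 / 2 : ℝ)) ^ (q + 1)) = 2 ^ (q + 1) := by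
    rw [show (1 - (1 / 2 : ℝ)) = (2 : ℝ)⁻¹ from by norm_num, one_div, ← inv_pow, inv_inv]
  have base2 : HasSum (fun n : ℕ =>
      (1 / 2 : ℝ) ^ (q + 1) * (((n + q).choose q : ℝ) * (1 / 2 : ℝ) ^ n)) 1 := by
    have h2 := base.mul_left ((1 / 2 : ℝ) ^ (q + 1))
    rw [hval] at h2
    convert h2 using 1
    · rfl
    rw [← mul_pow]
    norm_num
  have hinj : Function.Injective (fun n : ℕ => n + (q - 1)) := fun a b h => by
    simpa using h
  have hvan : ∀ x ∉ Set.range (fun n : ℕ => n + (q - 1)),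
      (1 / 2 : ℝ) ^ (x + 2) * ((x + 1).choose q : ℝ) = 0 := by
    intro x hx
    have hlt : x + 1 < q := by
      by_contra hc
      exact hx ⟨x - (q - 1), show x - (q - 1) + (q - 1) = x from by omega⟩
    rw [Nat.choose_eq_zero_of_lt hlt]
    simp
  rw [← Function.Injective.hasSum_iff hinj hvan]
  convert base2 using 2 with n
  show (1 / 2 : ℝ) ^ (n + (q - 1) + 2) * ((n + (q - 1) + 1).choose q : ℝ) = _
  rw [show n + (q - 1) + 1 = n + q from by omega,
    show n + (q - 1) + 2 = (q + 1) + n from by omega, pow_add]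
  ring

lemma summand_eq (d : ℕ) (hd : 1 ≤ d) (l h : ℕ) :
    (1 / 2 : ℝ) ^ ((l + 1) + (h + 1) + 2) *
        ((d + (l + 1) * (h + 1) - 1).choose ((l + 1) * (h + 1) - 1) : ℝ)
      = ∑ p ∈ Finset.range (d + 1), ∑ q ∈ Finset.range (d + 1),
          ((1 / 2 : ℝ) ^ (l + 2) * ((l + 1).choose p : ℝ)) *
            (((1 / 2 : ℝ) ^ (h + 2) * ((h + 1).choose q : ℝ)) * (PackedCount p q d : ℝ)) := by
  have hm : 1 ≤ (l + 1) * (h + 1) :=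
    Nat.one_le_iff_ne_zero.2 (Nat.mul_ne_zero (Nat.succ_ne_zero l) (Nat.succ_ne_zero h))
  have hch : (d + (l + 1) * (h + 1) - 1).choose ((l + 1) * (h + 1) - 1)
      = ((l + 1) * (h + 1) + d - 1).choose d := by
    have h2 : d ≤ d + (l + 1) * (h + 1) - 1 := by omega
    rw [show (l + 1) * (h + 1) + d - 1 = d + (l + 1) * (h + 1) - 1 from by omega,
      ← Nat.choose_symm h2]
    congr 1
    omega
  rw [hch, mat_decomp_fixed (l + 1) (h + 1) d hd]
  push_cast
  rw [Finset.mul_sum]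
  refine Finset.sum_congr rfl fun p _ => ?_
  rw [Finset.mul_sum]
  refine Finset.sum_congr rfl fun q _ => ?_
  rw [show (l + 1) + (h + 1) + 2 = (l + 2) + (h + 2) from by omega, pow_add]
  ring

lemma inner_hasSum (d : ℕ) (hd : 1 ≤ d) (l : ℕ) :
    HasSum (fun h : ℕ => (1 / 2 : ℝ) ^ ((l + 1) + (h + 1) + 2) *
        ((d + (l + 1) * (h + 1) - 1).choose ((l + 1) * (h + 1) - 1) : ℝ))
      (∑ p ∈ Finset.range (d + 1), ∑ q ∈ Finset.range (d + 1),
        ((1 / 2 : ℝ) ^ (l + 2) * ((l + 1).choose p : ℝ)) * (PackedCount p q d : ℝ)) := by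
  simp only [summand_eq d hd l]
  refine hasSum_sum fun p _ => hasSum_sum fun q hq => ?_
  rcases Nat.eq_zero_or_pos q with rfl | hq1
  · have hP : PackedCount p 0 d = 0 := packedCount_eq_zero hd (by omega)
    simp only [hP, Nat.cast_zero, mul_zero]
    exact hasSum_zero
  · have := ((keySum q hq1).mul_right ((PackedCount p q d : ℝ))).mul_left
      ((1 / 2 : ℝ) ^ (l + 2) * ((l + 1).choose p : ℝ))
    simpa using this

lemma outer_hasSum (d : ℕ) (hd : 1 ≤ d) :
    HasSum (fun l : ℕ => ∑ p ∈ Finset.range (d + 1), ∑ q ∈ Finset.range (d + 1),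
        ((1 / 2 : ℝ) ^ (l + 2) * ((l + 1).choose p : ℝ)) * (PackedCount p q d : ℝ))
      (∑ p ∈ Finset.range (d + 1), ∑ q ∈ Finset.range (d + 1), (PackedCount p q d : ℝ)) := by
  refine hasSum_sum fun p hp => hasSum_sum fun q hq => ?_
  rcases Nat.eq_zero_or_pos p with rfl | hp1
  · have hP : PackedCount 0 q d = 0 := packedCount_eq_zero hd (by omega)
    simp only [hP, Nat.cast_zero, mul_zero, zero_mul]
    exact hasSum_zero
  · have := (keySum p hp1).mul_right ((PackedCount p q d : ℝ))
    simpa using this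

end analytic

/-- The number of packed matrices of degree `d ≥ 1` (that is,
`dim MQSym_d`) equals `Σ_{l,h ≥ 1} (1/2)^{l+h+2} · binom(d+lh−1, lh−1)`. -/
theorem card_packedMatrix_degree (d : ℕ) (hd : 1 ≤ d) :
    (Nat.card {P : PackedMatrix // P.degree = d} : ℝ) =
      ∑' (l : ℕ) (h : ℕ),
        (1 / 2 : ℝ) ^ ((l + 1) + (h + 1) + 2) *
          (Nat.choose (d + (l + 1) * (h + 1) - 1) ((l + 1) * (h + 1) - 1)) := by
  have hR : ∑' (l : ℕ) (h : ℕ),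
      (1 / 2 : ℝ) ^ ((l + 1) + (h + 1) + 2) *
        (Nat.choose (d + (l + 1) * (h + 1) - 1) ((l + 1) * (h + 1) - 1) : ℝ)
      = ∑ p ∈ Finset.range (d + 1), ∑ q ∈ Finset.range (d + 1), (PackedCount p q d : ℝ) := by
    rw [tsum_congr (fun l => (inner_hasSum d hd l).tsum_eq)]
    exact (outer_hasSum d hd).tsum_eq
  rw [hR, card_packed_total d hd]
  push_cast
  rfl
end
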